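/- arXiv:2306.01468 — 2 statements merged into one kernel-verified Lean document; each statement's English description precedes it below -/
import Mathlib

section
/- Let k_X(x, x') = ψ(x − x') be a translation-invariant kernel on ℝ^d, F_ν and G_ν two probability measures on ℝ^d (error distributions), and w_1,…,w_n ∈ ℝ^d. Let P = (1/n)∑_i (F_ν shifted by w_i) and Q = (1/n)∑_i (G_ν shifted by w_i), where 'F shifted by w' denotes the pushforward of F under ν ↦ w + ν. Then MMD_{k_X}(P, Q) ≤ MMD_{k_X}(F_ν, G_ν). -/
open MeasureTheory
open scoped RealInnerProductSpace

section Aux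

variable {H : Type*} [NormedAddCommGroup H] [InnerProductSpace ℝ H] [CompleteSpace H]
  {d : ℕ}

private lemma inner_integral_integral
    (φ : EuclideanSpace ℝ (Fin d) → H)
    (μ ν : Measure (EuclideanSpace ℝ (Fin d)))
    (v : EuclideanSpace ℝ (Fin d))
    (hμ : Integrable (fun u => φ (v + u)) μ)
    (hν : Integrable (fun u => φ (v + u)) ν) :
    ⟪∫ u, φ (v + u) ∂μ, ∫ u, φ (v + u) ∂ν⟫ =
      ∫ u', ∫ u, ⟪φ (v + u'), φ (v + u)⟫ ∂μ ∂ν := by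
  rw [← integral_inner hν]
  refine integral_congr_ae (Filter.Eventually.of_forall fun u' => ?_)
  simp only []
  rw [real_inner_comm, ← integral_inner hμ]

private lemma norm_shift_invariant
    (φ : EuclideanSpace ℝ (Fin d) → H)
    (ψ : EuclideanSpace ℝ (Fin d) → ℝ)
    (hk : ∀ x x', ⟪φ x, φ x'⟫ = ψ (x - x'))
    (F G : Measure (EuclideanSpace ℝ (Fin d)))
    (hintF : ∀ v : EuclideanSpace ℝ (Fin d), Integrable (fun u => φ (v + u)) F)
    (hintG : ∀ v : EuclideanSpace ℝ (Fin d), Integrable (fun u => φ (v + u)) G)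
    (v : EuclideanSpace ℝ (Fin d)) :
    ‖(∫ u, φ (v + u) ∂F) - ∫ u, φ (v + u) ∂G‖ =
      ‖(∫ u, φ u ∂F) - ∫ u, φ u ∂G‖ := by
  have hinner : ∀ (μ ν : Measure (EuclideanSpace ℝ (Fin d))),
      Integrable (fun u => φ (v + u)) μ → Integrable (fun u => φ (v + u)) ν →
      Integrable (fun u => φ u) μ → Integrable (fun u => φ u) ν →
      ⟪∫ u, φ (v + u) ∂μ, ∫ u, φ (v + u) ∂ν⟫ = ⟪∫ u, φ u ∂μ, ∫ u, φ u ∂ν⟫ := by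
    intro μ ν h1 h2 h3 h4
    have e0 : ⟪∫ u, φ u ∂μ, ∫ u, φ u ∂ν⟫ =
        ∫ u', ∫ u, ⟪φ (0 + u'), φ (0 + u)⟫ ∂μ ∂ν := by
      have := inner_integral_integral φ μ ν 0 (by simpa using h3) (by simpa using h4)
      simpa using this
    rw [inner_integral_integral φ μ ν v h1 h2, e0]
    congr 1; ext u'; congr 1; ext u
    rw [hk, hk]
    congr 1
    abel
  have h0F : Integrable (fun u => φ u) F := by simpa using hintF 0
  have h0G : Integrable (fun u => φ u) G := by simpa using hintG 0
  have hsq : ‖(∫ u, φ (v + u) ∂F) - ∫ u, φ (v + u) ∂G‖ ^ 2 =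
      ‖(∫ u, φ u ∂F) - ∫ u, φ u ∂G‖ ^ 2 := by
    rw [← real_inner_self_eq_norm_sq, ← real_inner_self_eq_norm_sq,
      inner_sub_sub_self, inner_sub_sub_self,
      hinner F F (hintF v) (hintF v) h0F h0F,
      hinner F G (hintF v) (hintG v) h0F h0G,
      hinner G F (hintG v) (hintF v) h0G h0F,
      hinner G G (hintG v) (hintG v) h0G h0G]
  nlinarith [norm_nonneg ((∫ u, φ (v + u) ∂F) - ∫ u, φ (v + u) ∂G),
    norm_nonneg ((∫ u, φ u ∂F) - ∫ u, φ u ∂G)]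

end Aux

/-- for a translation-invariant kernel k_X(x,x') = ψ(x−x') = ⟪φ x, φ x'⟫
on ℝ^d, error distributions F, G and points w₁,…,w_n, the MMD (RKHS-norm distance of
kernel mean embeddings) between the shifted mixtures P = (1/n)∑_i (F shifted by w_i)
and Q = (1/n)∑_i (G shifted by w_i) is at most MMD_{k_X}(F, G). -/
theorem shifted_mixture_mmd_le {H : Type*}
    [NormedAddCommGroup H] [InnerProductSpace ℝ H] [CompleteSpace H]
    (d n : ℕ) (hn : 0 < n)
    (φ : EuclideanSpace ℝ (Fin d) → H)
    (ψ : EuclideanSpace ℝ (Fin d) → ℝ)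
    (hk : ∀ x x', ⟪φ x, φ x'⟫ = ψ (x - x'))
    (F G : Measure (EuclideanSpace ℝ (Fin d)))
    [IsProbabilityMeasure F] [IsProbabilityMeasure G]
    (w : Fin n → EuclideanSpace ℝ (Fin d))
    (hintF : ∀ v : EuclideanSpace ℝ (Fin d), Integrable (fun u => φ (v + u)) F)
    (hintG : ∀ v : EuclideanSpace ℝ (Fin d), Integrable (fun u => φ (v + u)) G) :
    ‖(n : ℝ)⁻¹ • ∑ i, (∫ u, φ (w i + u) ∂F) -
        (n : ℝ)⁻¹ • ∑ i, (∫ u, φ (w i + u) ∂G)‖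
      ≤ ‖(∫ u, φ u ∂F) - ∫ u, φ u ∂G‖ := by
  have hshift := norm_shift_invariant φ ψ hk F G hintF hintG
  rw [← smul_sub, ← Finset.sum_sub_distrib, norm_smul]
  have hb : ‖∑ i, ((∫ u, φ (w i + u) ∂F) - ∫ u, φ (w i + u) ∂G)‖
      ≤ ∑ i : Fin n, ‖(∫ u, φ u ∂F) - ∫ u, φ u ∂G‖ := by
    refine (norm_sum_le _ _).trans (Finset.sum_le_sum fun i _ => ?_)
    rw [hshift (w i)]
  calc ‖(n:ℝ)⁻¹‖ * ‖∑ i, ((∫ u, φ (w i + u) ∂F) - ∫ u, φ (w i + u) ∂G)‖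
      ≤ ‖(n:ℝ)⁻¹‖ * ∑ i : Fin n, ‖(∫ u, φ u ∂F) - ∫ u, φ u ∂G‖ := by
        exact mul_le_mul_of_nonneg_left hb (norm_nonneg _)
    _ = ‖(∫ u, φ u ∂F) - ∫ u, φ u ∂G‖ := by
        rw [Finset.sum_const, Finset.card_univ, Fintype.card_fin]
        rw [Real.norm_eq_abs, abs_of_nonneg (by positivity)]
        field_simp
        rw [nsmul_eq_mul]
end

section
/- For the squared RBF kernel k(x,x') = exp(−‖x−x'‖²/l²) on ℝ^d, the squared MMD between F₁ = N(0, σ₁² I) and F₂ = N(0, σ₂² I) equals (l²/(l²+4σ₁²))^{d/2} − 2(l²/(l²+2σ₁²+2σ₂²))^{d/2} + (l²/(l²+4σ₂²))^{d/2}. -/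
open MeasureTheory ProbabilityTheory Real
open scoped NNReal ENNReal

lemma integral_rexp_quad {a : ℝ} (ha : 0 < a) (b e : ℝ) :
    ∫ x : ℝ, Real.exp (-a * x ^ 2 + b * x + e)
      = Real.sqrt (π / a) * Real.exp (e + b ^ 2 / (4 * a)) := by
  have h : ∀ x : ℝ, -a * x ^ 2 + b * x + e
      = -a * (x - b / (2 * a)) ^ 2 + (e + b ^ 2 / (4 * a)) := by
    intro x; field_simp; ring
  simp_rw [h, Real.exp_add, integral_mul_const]
  rw [integral_sub_right_eq_self (fun x : ℝ => Real.exp (-a * x ^ 2)) (b / (2 * a)),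
    integral_gaussian]

lemma int1 {c : ℝ} (hc : 0 < c) (v : ℝ≥0) (y : ℝ) :
    ∫ x, Real.exp (-(c * (y - x) ^ 2)) ∂(gaussianReal 0 v)
      = Real.sqrt (1 / (1 + 2 * c * v)) * Real.exp (-(c / (1 + 2 * c * v)) * y ^ 2) := by
  rcases eq_or_ne v 0 with hv | hv
  · subst hv
    simp [gaussianReal_zero_var, integral_dirac]
  · set V : ℝ := (v : ℝ) with hV
    have hVpos : 0 < V := by positivity
    have hden : 0 < 1 + 2 * c * V := by positivity
    rw [gaussianReal_of_var_ne_zero 0 hv, gaussianPDF_def]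
    have hmeas : Measurable fun x => (gaussianPDFReal 0 v x).toNNReal :=
      (measurable_gaussianPDFReal 0 v).real_toNNReal
    have hdens : (fun x => ENNReal.ofReal (gaussianPDFReal 0 v x))
        = fun x => ((gaussianPDFReal 0 v x).toNNReal : ENNReal) := rfl
    rw [hdens, integral_withDensity_eq_integral_smul hmeas]
    have hpt : ∀ x : ℝ, ((gaussianPDFReal 0 v x).toNNReal : ℝ) • Real.exp (-(c * (y - x) ^ 2))
        = (Real.sqrt (2 * π * V))⁻¹
          * Real.exp (-(c + 1 / (2 * V)) * x ^ 2 + (2 * c * y) * x + (-(c * y ^ 2))) := by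
      intro x
      rw [smul_eq_mul, Real.coe_toNNReal _ (gaussianPDFReal_nonneg 0 v x), gaussianPDFReal]
      rw [mul_assoc, ← Real.exp_add]
      congr 1
      rw [hV]
      have hv0 : (v:ℝ) ≠ 0 := by exact_mod_cast hv
      field_simp
      ring
    simp_rw [NNReal.smul_def, hpt]
    rw [integral_const_mul, integral_rexp_quad (by positivity)]
    have h1 : Real.sqrt (π / (c + 1 / (2 * V)))
        = Real.sqrt (2 * π * V) * Real.sqrt (1 / (1 + 2 * c * V)) := by
      rw [← Real.sqrt_mul (by positivity)]
      congr 1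
      field_simp
      ring
    have h2 : -(c * y ^ 2) + (2 * c * y) ^ 2 / (4 * (c + 1 / (2 * V)))
        = -(c / (1 + 2 * c * V)) * y ^ 2 := by
      field_simp
      ring
    rw [h1, h2]
    have : Real.sqrt (2 * π * V) ≠ 0 := by positivity
    field_simp

lemma int0 {c : ℝ} (hc : 0 < c) (w : ℝ≥0) :
    ∫ x, Real.exp (-(c * x ^ 2)) ∂(gaussianReal 0 w) = Real.sqrt (1 / (1 + 2 * c * w)) := by
  have := int1 hc w 0
  simpa using this

lemma pi_int {d : ℕ} (μ : Measure ℝ) [SigmaFinite μ] (f : Fin d → ℝ → ℝ) :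
    ∫ x : Fin d → ℝ, ∏ i, f i (x i) ∂(Measure.pi fun _ => μ) = ∏ i, ∫ x, f i x ∂μ := by
  letI : MeasureSpace ℝ := ⟨μ⟩
  exact MeasureTheory.integral_fintype_prod_eq_prod (ι := Fin d) f

lemma pi_double (d : ℕ) {l : ℝ} (hl : 0 < l) (v w : ℝ≥0) :
    ∫ a, ∫ b, Real.exp (-(∑ i, (a i - b i) ^ 2) / l ^ 2)
        ∂(Measure.pi fun _ : Fin d => gaussianReal 0 v)
        ∂(Measure.pi fun _ : Fin d => gaussianReal 0 w)
      = (l ^ 2 / (l ^ 2 + 2 * v + 2 * w)) ^ ((d : ℝ) / 2) := by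
  set c : ℝ := 1 / l ^ 2 with hc
  have hcpos : 0 < c := by positivity
  have hd1 : (0:ℝ) < 1 + 2 * c * v := by positivity
  set c' : ℝ := c / (1 + 2 * c * v) with hc'
  have hc'pos : 0 < c' := by positivity
  have hker : ∀ a b : Fin d → ℝ, Real.exp (-(∑ i, (a i - b i) ^ 2) / l ^ 2)
      = ∏ i, Real.exp (-(c * (a i - b i) ^ 2)) := by
    intro a b
    rw [← Real.exp_sum]
    congr 1
    rw [neg_div, Finset.sum_div, ← Finset.sum_neg_distrib]
    refine Finset.sum_congr rfl fun i _ => ?_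
    rw [hc]; ring
  have hin : ∀ a : Fin d → ℝ,
      ∫ b, ∏ i, Real.exp (-(c * (a i - b i) ^ 2))
          ∂(Measure.pi fun _ : Fin d => gaussianReal 0 v)
        = ∏ i, (Real.sqrt (1 / (1 + 2 * c * v)) * Real.exp (-c' * (a i) ^ 2)) := by
    intro a
    rw [pi_int (gaussianReal 0 v) (fun i x => Real.exp (-(c * (a i - x) ^ 2)))]
    exact Finset.prod_congr rfl fun i _ => by
      rw [int1 hcpos v (a i)]
  simp_rw [hker, hin]
  rw [pi_int (gaussianReal 0 w)
    (fun _ y => Real.sqrt (1 / (1 + 2 * c * v)) * Real.exp (-c' * y ^ 2))]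
  have hone : ∀ i : Fin d, (∫ y, Real.sqrt (1 / (1 + 2 * c * v)) * Real.exp (-c' * y ^ 2)
      ∂(gaussianReal 0 w))
      = Real.sqrt (1 / (1 + 2 * c * v)) * Real.sqrt (1 / (1 + 2 * c' * w)) := by
    intro i
    rw [integral_const_mul]
    congr 1
    simp_rw [neg_mul]
    exact int0 hc'pos w
  rw [Finset.prod_congr rfl fun i _ => hone i, Finset.prod_const, Finset.card_univ,
    Fintype.card_fin]
  have hd2 : (0:ℝ) < 1 + 2 * c' * w := by positivity
  have hX : (0:ℝ) < l ^ 2 / (l ^ 2 + 2 * v + 2 * w) := by positivity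
  have hs : Real.sqrt (1 / (1 + 2 * c * v)) * Real.sqrt (1 / (1 + 2 * c' * w))
      = Real.sqrt (l ^ 2 / (l ^ 2 + 2 * v + 2 * w)) := by
    rw [← Real.sqrt_mul (by positivity)]
    congr 1
    rw [hc', hc]
    have hl2 : (l:ℝ) ^ 2 ≠ 0 := by positivity
    have h3 : (l:ℝ) ^ 2 + 2 * v + 2 * w ≠ 0 := by positivity
    field_simp
  rw [hs, Real.sqrt_eq_rpow, ← Real.rpow_natCast _ d, ← Real.rpow_mul hX.le]
  congr 1
  ring


/-- Squared MMD via the double-integral formula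
MMD_k(P,Q)² = E_{P×P}[k] − 2E_{P×Q}[k] + E_{Q×Q}[k]. -/
noncomputable def mmdSq {A : Type*} [MeasurableSpace A] (k : A → A → ℝ)
    (P Q : Measure A) : ℝ :=
  (∫ a, ∫ b, k a b ∂P ∂P) - 2 * (∫ a, ∫ b, k a b ∂Q ∂P) + ∫ a, ∫ b, k a b ∂Q ∂Q

/-- for the squared RBF kernel k(x,x') = exp(−‖x−x'‖²/l²) on ℝ^d,
MMD²(N(0,σ₁²I), N(0,σ₂²I)) =
(l²/(l²+4σ₁²))^{d/2} − 2(l²/(l²+2σ₁²+2σ₂²))^{d/2} + (l²/(l²+4σ₂²))^{d/2}. -/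
theorem squared_rbf_mmd_gaussians (d : ℕ) (l : ℝ) (hl : 0 < l)
    (σ₁ σ₂ : NNReal) :
    mmdSq (fun x x' : Fin d → ℝ => Real.exp (-(∑ i, (x i - x' i) ^ 2) / l ^ 2))
        (Measure.pi fun _ : Fin d => gaussianReal 0 (σ₁ ^ 2))
        (Measure.pi fun _ : Fin d => gaussianReal 0 (σ₂ ^ 2))
      = (l ^ 2 / (l ^ 2 + 4 * (σ₁ : ℝ) ^ 2)) ^ ((d : ℝ) / 2)
        - 2 * (l ^ 2 / (l ^ 2 + 2 * (σ₁ : ℝ) ^ 2 + 2 * (σ₂ : ℝ) ^ 2)) ^ ((d : ℝ) / 2)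
        + (l ^ 2 / (l ^ 2 + 4 * (σ₂ : ℝ) ^ 2)) ^ ((d : ℝ) / 2) := by
  rw [mmdSq, pi_double d hl (σ₁ ^ 2) (σ₁ ^ 2), pi_double d hl (σ₂ ^ 2) (σ₁ ^ 2),
    pi_double d hl (σ₂ ^ 2) (σ₂ ^ 2)]
  have e1 : l ^ 2 + 2 * ((σ₁ ^ 2 : ℝ≥0) : ℝ) + 2 * ((σ₁ ^ 2 : ℝ≥0) : ℝ)
      = l ^ 2 + 4 * (σ₁ : ℝ) ^ 2 := by push_cast; ring
  have e2 : l ^ 2 + 2 * ((σ₂ ^ 2 : ℝ≥0) : ℝ) + 2 * ((σ₁ ^ 2 : ℝ≥0) : ℝ)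
      = l ^ 2 + 2 * (σ₁ : ℝ) ^ 2 + 2 * (σ₂ : ℝ) ^ 2 := by push_cast; ring
  have e3 : l ^ 2 + 2 * ((σ₂ ^ 2 : ℝ≥0) : ℝ) + 2 * ((σ₂ ^ 2 : ℝ≥0) : ℝ)
      = l ^ 2 + 4 * (σ₂ : ℝ) ^ 2 := by push_cast; ring
  rw [e1, e2, e3]
end
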